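/- If G is an unmixed bipartite graph, then for every s ≥ 1 and every s-fold product e_1⋯e_s of edges of G (not necessarily distinct), the graph G' associated to the colon ideal (I(G)^{s+1} : e_1⋯e_s) is also an unmixed bipartite graph. -/

import Mathlib

/-!
Common definitions: edge ideals, Castelnuovo–Mumford regularity (via graded
free resolutions), chordal/co-chordal graphs, co-chordal cover number,
induced matchings, matchings, vertex covers, even-connections and the
polarized colon graph.
-/

open MvPolynomial

namespace RegPowers

/-- The edge ideal `I(G)` of a finite simple graph `G`, inside `k[x_v : v ∈ V]`:
the ideal generated by the monomials `x_u * x_v` for edges `{u, v}` of `G`. -/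
noncomputable def edgeIdeal (k : Type) [Field k] {V : Type} (G : SimpleGraph V) :
    Ideal (MvPolynomial V k) :=
  Ideal.span {m | ∃ u v : V, G.Adj u v ∧ m = X u * X v}

section Regularity

variable {k : Type} [Field k] {V : Type}

/-- A finite graded free resolution of a homogeneous ideal `I` of the polynomial
ring `k[x_v : v ∈ V]`:  free modules `F i = R^(rank i)` with generators of the
internal degrees `deg i`, an augmentation `F 0 → I` given by homogeneous
generators `gen` of `I`, and graded (degree preserving) differentials
`d i : F (i+1) → F i` given by matrices with homogeneous entries, forming an
exact sequence `0 → F len → ⋯ → F 1 → F 0 → I → 0`. -/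
structure GradedFreeResolution (I : Ideal (MvPolynomial V k)) where
  rank : ℕ → ℕ
  deg : (i : ℕ) → Fin (rank i) → ℕ
  len : ℕ
  rank_eq_zero : ∀ i : ℕ, len < i → rank i = 0
  gen : Fin (rank 0) → MvPolynomial V k
  gen_homog : ∀ l : Fin (rank 0), (gen l).IsHomogeneous (deg 0 l)
  gen_span : Ideal.span (Set.range gen) = I
  d : (i : ℕ) → Matrix (Fin (rank i)) (Fin (rank (i + 1))) (MvPolynomial V k)
  d_homog : ∀ (i : ℕ) (a : Fin (rank i)) (b : Fin (rank (i + 1))),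
    d i a b = 0 ∨ ∃ n : ℕ, (d i a b).IsHomogeneous n ∧ deg (i + 1) b = deg i a + n
  exact_zero :
    LinearMap.ker (Fintype.linearCombination (MvPolynomial V k) gen)
      = LinearMap.range (d 0).mulVecLin
  exact_succ : ∀ i : ℕ,
    LinearMap.ker (d i).mulVecLin = LinearMap.range (d (i + 1)).mulVecLin

/-- The Castelnuovo–Mumford regularity of a homogeneous ideal `I` in a polynomial
ring over a field: the least `r` such that `I` admits a (finite) graded free
resolution whose `i`-th free module is generated in degrees `≤ r + i`.
(The minimal graded free resolution realizes this minimum, so this agrees with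
the usual definition `reg I = max { j - i : Tor_i(I, k)_j ≠ 0 }`.) -/
noncomputable def reg (I : Ideal (MvPolynomial V k)) : ℕ :=
  sInf { r : ℕ | ∃ F : GradedFreeResolution I,
    ∀ (i : ℕ) (l : Fin (F.rank i)), F.deg i l ≤ r + i }

/-- A homogeneous ideal has a linear (minimal free) resolution iff it is generated
in a single degree `d` and its Castelnuovo–Mumford regularity equals `d`. -/
def HasLinearResolution (I : Ideal (MvPolynomial V k)) : Prop :=
  ∃ d : ℕ, (∃ S : Set (MvPolynomial V k),
      (∀ f ∈ S, f.IsHomogeneous d) ∧ Ideal.span S = I) ∧ reg I = d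

/-- A quadratic ideal has a linear presentation (i.e. its minimal free resolution
is 1-step linear): it is generated in degree 2 and admits a graded free resolution
whose zeroth free module is generated in degree `2` and whose first free module is
generated in degrees `≤ 3`. -/
def HasLinearPresentation (I : Ideal (MvPolynomial V k)) : Prop :=
  ∃ F : GradedFreeResolution I,
    (∀ l : Fin (F.rank 0), F.deg 0 l = 2) ∧ (∀ l : Fin (F.rank 1), F.deg 1 l ≤ 3)

end Regularity

section Graphs

variable {V : Type}

/-- A graph is chordal if every induced cycle in it has length 3, i.e. it has no
induced cycle of length `≥ 4`. -/
def IsChordal (G : SimpleGraph V) : Prop :=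
  ∀ n : ℕ, 4 ≤ n → IsEmpty (SimpleGraph.cycleGraph n ↪g G)

/-- The co-chordal cover number `cochord(G)`: the least `n` such that there are
`n` subgraphs `H 1, …, H n` of `G`, each with chordal complement, whose edge sets
cover the edge set of `G`. -/
noncomputable def cochord (G : SimpleGraph V) : ℕ :=
  sInf { n : ℕ | ∃ H : Fin n → SimpleGraph V,
    (∀ i, H i ≤ G ∧ IsChordal (H i)ᶜ) ∧ (⨆ i, H i) = G }

/-- The data `(u i, v i)`, `i < n`, is an induced matching of `G` of size `n`:
the edges `{u i, v i}` are edges of `G`, pairwise vertex disjoint, and the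
subgraph induced on their endpoints contains no other edges. -/
def IsInducedMatching (G : SimpleGraph V) {n : ℕ} (u v : Fin n → V) : Prop :=
  (∀ i, G.Adj (u i) (v i)) ∧
  ∀ i j, i ≠ j →
    (u i ≠ u j ∧ u i ≠ v j ∧ v i ≠ u j ∧ v i ≠ v j) ∧
    (¬ G.Adj (u i) (u j) ∧ ¬ G.Adj (u i) (v j) ∧
      ¬ G.Adj (v i) (u j) ∧ ¬ G.Adj (v i) (v j))

/-- The induced matching number `ν(G)`: the maximum size of an induced matching. -/
noncomputable def inducedMatchingNumber (G : SimpleGraph V) : ℕ :=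
  sSup { n : ℕ | ∃ u v : Fin n → V, IsInducedMatching G u v }

/-- `M` is a maximal matching of `G`: a set of pairwise disjoint edges of `G`
such that every edge of `G` meets an edge of `M`. -/
def IsMaximalMatching (G : SimpleGraph V) (M : Finset (Sym2 V)) : Prop :=
  (↑M ⊆ G.edgeSet) ∧
  ((M : Set (Sym2 V)).Pairwise fun e f => ∀ x : V, x ∈ e → x ∉ f) ∧
  ∀ e ∈ G.edgeSet, ∃ f ∈ M, ∃ x : V, x ∈ e ∧ x ∈ f

/-- The minimum matching number `β(G)`: the least cardinality of a maximal
matching of `G`. -/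
noncomputable def minMatchingNumber (G : SimpleGraph V) : ℕ :=
  sInf { n : ℕ | ∃ M : Finset (Sym2 V), IsMaximalMatching G M ∧ M.card = n }

/-- `(X, Y)` is a bipartition of `G`. -/
def IsBipartition (G : SimpleGraph V) (X Y : Finset V) : Prop :=
  Disjoint X Y ∧ (∀ v : V, v ∈ X ∨ v ∈ Y) ∧
    ∀ u v : V, G.Adj u v → (u ∈ X ∧ v ∈ Y) ∨ (u ∈ Y ∧ v ∈ X)

/-- `G` is bipartite. -/
def IsBipartite (G : SimpleGraph V) : Prop :=
  ∃ X Y : Finset V, IsBipartition G X Y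

/-- `C` is a vertex cover of `G`. -/
def IsVertexCover (G : SimpleGraph V) (C : Finset V) : Prop :=
  ∀ u v : V, G.Adj u v → u ∈ C ∨ v ∈ C

/-- `C` is a minimal vertex cover of `G`. -/
def IsMinimalVertexCover (G : SimpleGraph V) (C : Finset V) : Prop :=
  IsVertexCover G C ∧ ∀ C' ⊆ C, IsVertexCover G C' → C' = C

/-- `G` is unmixed (well-covered): all minimal vertex covers have the same size. -/
def IsUnmixed (G : SimpleGraph V) : Prop :=
  ∀ C C' : Finset V, IsMinimalVertexCover G C → IsMinimalVertexCover G C' →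
    C.card = C'.card

/-- `G` contains no induced path on `m` vertices. -/
def PathFree (m : ℕ) (G : SimpleGraph V) : Prop :=
  IsEmpty (SimpleGraph.pathGraph m ↪g G)

/-- `G` is weakly chordal: every induced cycle in `G` and in `Gᶜ` has length at
most 4. -/
def IsWeaklyChordal (G : SimpleGraph V) : Prop :=
  ∀ n : ℕ, 5 ≤ n →
    IsEmpty (SimpleGraph.cycleGraph n ↪g G) ∧ IsEmpty (SimpleGraph.cycleGraph n ↪g Gᶜ)

/-- `G` is `nK₂`-free: it has no induced matching of size `n`. -/
def NK2Free (n : ℕ) (G : SimpleGraph V) : Prop :=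
  ¬ ∃ u v : Fin n → V, IsInducedMatching G u v

/-- The whiskered graph `W(H)` of `H`: a pendant vertex is attached to every
vertex of `H` (the second copy of the vertex set consists of the pendant
vertices). -/
def whisker (H : SimpleGraph V) : SimpleGraph (V ⊕ V) :=
  SimpleGraph.fromRel fun a b =>
    match a, b with
    | Sum.inl u, Sum.inl v => H.Adj u v
    | Sum.inl u, Sum.inr v => u = v
    | _, _ => False

end Graphs

section EvenConnection

variable {V : Type} [DecidableEq V]

/-- `u` and `v` (possibly equal) are even-connected in `G` with respect to the
`s`-fold product `e 0 ⋯ e (s-1)` of edges of `G`: there is a walk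
`p 0, p 1, …, p (2m+1)` in `G` with `m ≥ 1` from `u` to `v` such that every
even-indexed edge `{p (2l+1), p (2l+2)}` is one of the `e i`, and each `e i` is
used at most as many times as it occurs in the list `e`. -/
def EvenConnected (G : SimpleGraph V) {s : ℕ} (e : Fin s → V × V) (u v : V) : Prop :=
  ∃ (m : ℕ) (p : ℕ → V), 1 ≤ m ∧ p 0 = u ∧ p (2 * m + 1) = v ∧
    (∀ r : ℕ, r < 2 * m + 1 → G.Adj (p r) (p (r + 1))) ∧
    (∀ l : ℕ, l < m → ∃ i : Fin s,
      Sym2.mk (p (2 * l + 1)) (p (2 * l + 2)) = Sym2.mk (e i).1 (e i).2) ∧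
    ∀ i : Fin s,
      ((Finset.range m).filter fun l =>
          Sym2.mk (p (2 * l + 1)) (p (2 * l + 2)) = Sym2.mk (e i).1 (e i).2).card ≤
        (Finset.univ.filter fun j : Fin s => Sym2.mk (e j).1 (e j).2 = Sym2.mk (e i).1 (e i).2).card

/-- The graph `G'` associated to the polarization of the colon ideal
`(I(G)^(s+1) : e 0 ⋯ e (s-1))` (by Banerjee's description of its quadratic
generators): its edges are the edges of `G`, the pairs `{u, v}` of distinct
vertices that are even-connected with respect to `e 0 ⋯ e (s-1)`, and, for every
vertex `u` even-connected to itself, an edge from `u` to the new vertex `u'`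
introduced by polarizing `x_u ^ 2`. -/
def polarGraph (G : SimpleGraph V) {s : ℕ} (e : Fin s → V × V) :
    SimpleGraph (V ⊕ V) :=
  SimpleGraph.fromRel fun a b =>
    match a, b with
    | Sum.inl u, Sum.inl v => G.Adj u v ∨ EvenConnected G e u v
    | Sum.inl u, Sum.inr v => u = v ∧ EvenConnected G e u u
    | _, _ => False

end EvenConnection

end RegPowers

namespace RegPowers

set_option linter.unusedSectionVars false

section AuxMonomial

variable {V : Type} [Fintype V] [DecidableEq V]

/-- Exponent vector of the edge monomial `x_u x_v`. -/
noncomputable def eF (u v : V) : V →₀ ℕ := Finsupp.single u 1 + Finsupp.single v 1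

lemma eF_comm (u v : V) : eF u v = eF v u := add_comm _ _

lemma eF_apply (u v w : V) :
    eF u v w = (if u = w then 1 else 0) + (if v = w then 1 else 0) := by
  simp [eF, Finsupp.single_apply]

variable (k : Type) [Field k]

lemma X_mul_X (u v : V) :
    (X u * X v : MvPolynomial V k) = monomial (eF u v) 1 := by
  rw [MvPolynomial.X, MvPolynomial.X, MvPolynomial.monomial_mul, one_mul]; rfl

lemma prod_monomial_one {ι : Type} (S : Finset ι) (g : ι → (V →₀ ℕ)) :
    (∏ i ∈ S, monomial (g i) (1 : k)) = monomial (∑ i ∈ S, g i) 1 := by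
  induction S using Finset.cons_induction with
  | empty => simp
  | cons a S ha ih =>
    rw [Finset.prod_cons, Finset.sum_cons, ih, MvPolynomial.monomial_mul, one_mul]

variable (G : SimpleGraph V)

/-- Exponent vectors of the generators of `I(G)`. -/
def edgeSupps : Set (V →₀ ℕ) := {d | ∃ u v, G.Adj u v ∧ d = eF u v}

/-- Exponent vectors of the generators of `I(G)^n`. -/
def powSupps (n : ℕ) : Set (V →₀ ℕ) :=
  {d | ∃ E : Fin n → V × V, (∀ r, G.Adj (E r).1 (E r).2) ∧
    d = ∑ r, eF (E r).1 (E r).2}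

lemma edgeIdeal_eq_span :
    edgeIdeal k G = Ideal.span ((fun d => monomial d (1 : k)) '' edgeSupps G) := by
  unfold edgeIdeal
  congr 1
  ext m
  constructor
  · rintro ⟨u, v, h, rfl⟩
    exact ⟨eF u v, ⟨u, v, h, rfl⟩, (X_mul_X k u v).symm⟩
  · rintro ⟨d, ⟨u, v, h, rfl⟩, rfl⟩
    exact ⟨u, v, h, (X_mul_X k u v).symm⟩

lemma pow_edgeIdeal_eq_span (n : ℕ) :
    (edgeIdeal k G) ^ n
      = Ideal.span ((fun d => monomial d (1 : k)) '' powSupps G n) := by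
  induction n with
  | zero =>
    have h0 : powSupps G 0 = {0} := by
      ext d
      constructor
      · rintro ⟨E, _, rfl⟩; simp
      · rintro rfl; exact ⟨Fin.elim0, fun r => r.elim0, by simp⟩
    rw [pow_zero, h0]
    refine le_antisymm ?_ (by rw [Ideal.one_eq_top]; exact le_top)
    rw [Ideal.one_eq_top, ← Ideal.span_singleton_one, Ideal.span_le]
    rintro x rfl
    have : (1 : MvPolynomial V k) = monomial (0 : V →₀ ℕ) 1 := by simp
    rw [this]
    exact Ideal.subset_span ⟨0, rfl, rfl⟩
  | succ n ih =>
    rw [pow_succ, ih, edgeIdeal_eq_span k G, Ideal.span_mul_span']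
    congr 1
    ext m
    constructor
    · rintro ⟨x, ⟨d, ⟨E, hE, rfl⟩, rfl⟩, y, ⟨d', ⟨u, v, h, rfl⟩, rfl⟩, rfl⟩
      refine ⟨(∑ r, eF (E r).1 (E r).2) + eF u v, ⟨Fin.snoc E (u, v), ?_, ?_⟩, ?_⟩
      · intro r
        refine Fin.lastCases ?_ (fun i => ?_) r
        · simpa using h
        · simpa using hE i
      · rw [Fin.sum_univ_castSucc]
        simp
      · simp [MvPolynomial.monomial_mul]
    · rintro ⟨d, ⟨E, hE, rfl⟩, rfl⟩
      refine ⟨monomial (∑ r : Fin n, eF ((Fin.init E) r).1 ((Fin.init E) r).2) 1,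
        ⟨_, ⟨Fin.init E, fun r => hE _, rfl⟩, rfl⟩,
        monomial (eF (E (Fin.last n)).1 (E (Fin.last n)).2) 1,
        ⟨_, ⟨(E (Fin.last n)).1, (E (Fin.last n)).2, hE _, rfl⟩, rfl⟩, ?_⟩
      show monomial _ 1 * monomial _ 1 = monomial _ 1
      rw [MvPolynomial.monomial_mul, one_mul, Fin.sum_univ_castSucc]
      rfl

/-- Number of elements of `U` counted with multiplicity in `d`. -/
def cnt (U : Finset V) (d : V →₀ ℕ) : ℕ := ∑ a ∈ U, d a

lemma cnt_add (U : Finset V) (d d' : V →₀ ℕ) :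
    cnt U (d + d') = cnt U d + cnt U d' := by
  simp [cnt, Finset.sum_add_distrib]

lemma cnt_sum {ι : Type} (U : Finset V) (S : Finset ι) (g : ι → (V →₀ ℕ)) :
    cnt U (∑ i ∈ S, g i) = ∑ i ∈ S, cnt U (g i) := by
  simp only [cnt, Finsupp.finset_sum_apply]
  exact Finset.sum_comm

lemma cnt_eF (U : Finset V) (u v : V) :
    cnt U (eF u v) = (if u ∈ U then 1 else 0) + (if v ∈ U then 1 else 0) := by
  simp [cnt, eF_apply, Finset.sum_add_distrib, Finset.sum_ite_eq]

lemma dsum_eF (u v : V) : cnt Finset.univ (eF u v) = 2 := by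
  simp [cnt_eF]

lemma eq_of_le_of_dsum {d d' : V →₀ ℕ} (h : d' ≤ d)
    (h2 : cnt Finset.univ d = cnt Finset.univ d') : d' = d := by
  ext v
  by_contra hne
  have hle : ∀ w, d' w ≤ d w := Finsupp.le_def.mp h
  have hlt : d' v < d v := lt_of_le_of_ne (hle v) hne
  have : cnt Finset.univ d' < cnt Finset.univ d :=
    Finset.sum_lt_sum (fun i _ => hle i) ⟨v, Finset.mem_univ v, hlt⟩
  omega

lemma monomial_mem_span_iff {T : Set (V →₀ ℕ)} {d : V →₀ ℕ} :
    monomial d (1 : k) ∈ Ideal.span ((fun d => monomial d (1 : k)) '' T)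
      ↔ ∃ d' ∈ T, d' ≤ d := by
  rw [MvPolynomial.mem_ideal_span_monomial_image]
  constructor
  · intro h
    exact h d (by simp [MvPolynomial.mem_support_iff])
  · rintro ⟨d', hT, hle⟩ xi hxi
    have : xi = d := by
      by_contra hne
      rw [MvPolynomial.mem_support_iff, MvPolynomial.coeff_monomial,
        if_neg (fun h => hne h.symm)] at hxi
      exact hxi rfl
    exact ⟨d', hT, this ▸ hle⟩

end AuxMonomial

section AuxChar

variable {V : Type} [Fintype V] [DecidableEq V]

/-- Exponent vector of the product `e 0 ⋯ e (s-1)`. -/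
noncomputable def FF {s : ℕ} (e : Fin s → V × V) : V →₀ ℕ :=
  ∑ t, eF (e t).1 (e t).2

/-- `x_u x_v · e 0 ⋯ e (s-1)` is a product of `s+1` edges of `G`. -/
def Dec (G : SimpleGraph V) {s : ℕ} (e : Fin s → V × V) (u v : V) : Prop :=
  eF u v + FF e ∈ powSupps G (s + 1)

variable (k : Type) [Field k] {G G' : SimpleGraph V} {s : ℕ} {e : Fin s → V × V}

lemma prod_X_eq :
    (∏ i, (X (e i).1 * X (e i).2 : MvPolynomial V k)) = monomial (FF e) 1 := by
  calc (∏ i, (X (e i).1 * X (e i).2 : MvPolynomial V k))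
      = ∏ i, monomial (eF (e i).1 (e i).2) 1 :=
        Finset.prod_congr rfl fun i _ => X_mul_X k _ _
    _ = _ := prod_monomial_one k _ _

lemma cnt_FF (U : Finset V) :
    cnt U (FF e) = ∑ t, cnt U (eF (e t).1 (e t).2) := cnt_sum U _ _

lemma dsum_powSupps {n : ℕ} {d : V →₀ ℕ} (h : d ∈ powSupps G n) :
    cnt Finset.univ d = 2 * n := by
  obtain ⟨E, _, rfl⟩ := h
  rw [cnt_sum]
  simp [dsum_eF, mul_comm]

variable (hG' : edgeIdeal k G' =
      Submodule.colon ((edgeIdeal k G) ^ (s + 1))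
        (Ideal.span {∏ i, (X (e i).1 * X (e i).2 : MvPolynomial V k)}))

include hG'

lemma adj_iff_dec {u v : V} (huv : u ≠ v) : G'.Adj u v ↔ Dec G e u v := by
  have hcolon : ∀ p : MvPolynomial V k,
      p ∈ edgeIdeal k G' ↔ p * monomial (FF e) 1 ∈ (edgeIdeal k G) ^ (s + 1) := by
    intro p
    rw [hG', ← prod_X_eq (k := k)]
    exact Ideal.mem_colon_span_singleton
  constructor
  · intro hadj
    have h1 : (X u * X v : MvPolynomial V k) ∈ edgeIdeal k G' :=
      Ideal.subset_span ⟨u, v, hadj, rfl⟩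
    rw [hcolon, X_mul_X k, MvPolynomial.monomial_mul, one_mul,
      pow_edgeIdeal_eq_span k G, monomial_mem_span_iff k] at h1
    obtain ⟨d', hd', hle⟩ := h1
    have hdeq : d' = eF u v + FF e := by
      refine eq_of_le_of_dsum hle ?_
      rw [dsum_powSupps hd', cnt_add, dsum_eF]
      have : cnt Finset.univ (FF e) = 2 * s := by
        rw [cnt_FF]; simp [dsum_eF, mul_comm]
      rw [this]; ring
    show eF u v + FF e ∈ powSupps G (s + 1)
    exact hdeq ▸ hd'
  · intro hdec
    have h1 : monomial (eF u v + FF e) (1 : k) ∈ (edgeIdeal k G) ^ (s + 1) := by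
      rw [pow_edgeIdeal_eq_span k G, monomial_mem_span_iff k]
      exact ⟨_, hdec, le_rfl⟩
    have h2 : (X u * X v : MvPolynomial V k) ∈ edgeIdeal k G' := by
      rw [hcolon, X_mul_X k, MvPolynomial.monomial_mul, one_mul]
      exact h1
    rw [edgeIdeal_eq_span k G', X_mul_X k, monomial_mem_span_iff k] at h2
    obtain ⟨d', ⟨a, b, hab, rfl⟩, hle⟩ := h2
    have hle' := Finsupp.le_def.mp hle
    have ha : a = u ∨ a = v := by
      have h := hle' a
      simp only [eF_apply, eq_self_iff_true, if_true] at h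
      by_contra hc
      push_neg at hc
      have h1 : (if u = a then 1 else 0 : ℕ) = 0 := if_neg (fun h' => hc.1 h'.symm)
      have h2 : (if v = a then 1 else 0 : ℕ) = 0 := if_neg (fun h' => hc.2 h'.symm)
      omega
    have hb : b = u ∨ b = v := by
      have h := hle' b
      simp only [eF_apply, eq_self_iff_true, if_true] at h
      by_contra hc
      push_neg at hc
      have h1 : (if u = b then 1 else 0 : ℕ) = 0 := if_neg (fun h' => hc.1 h'.symm)
      have h2 : (if v = b then 1 else 0 : ℕ) = 0 := if_neg (fun h' => hc.2 h'.symm)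
      omega
    rcases ha with rfl | rfl <;> rcases hb with rfl | rfl
    · exact absurd rfl hab.ne
    · exact hab
    · exact hab.symm
    · exact absurd rfl hab.ne

lemma G_le_G' (he : ∀ i, G.Adj (e i).1 (e i).2) {u v : V} (h : G.Adj u v) :
    G'.Adj u v := by
  rw [adj_iff_dec k hG' h.ne]
  exact ⟨Fin.cons (u, v) e, fun r => Fin.cases h he r, by simp [Fin.sum_univ_succ, FF]⟩

omit hG'

lemma dec_noniso {u v : V} (hdec : Dec G e u v) : ∃ w, G.Adj u w := by
  obtain ⟨E, hE, heq⟩ := hdec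
  by_contra hno
  push_neg at hno
  have h1 : (1 : ℕ) ≤ (eF u v + FF e) u := by
    rw [Finsupp.add_apply, eF_apply, if_pos rfl]
    omega
  rw [heq] at h1
  have h2 : ∀ r : Fin (s + 1), eF (E r).1 (E r).2 u = 0 := by
    intro r
    rw [eF_apply]
    have h3 : (E r).1 ≠ u := fun h => hno (E r).2 (h ▸ hE r)
    have h4 : (E r).2 ≠ u := fun h => hno (E r).1 (h ▸ (hE r).symm)
    rw [if_neg h3, if_neg h4]
  rw [Finsupp.finset_sum_apply] at h1
  rw [Finset.sum_congr rfl (fun r _ => h2 r)] at h1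
  simp at h1

end AuxChar

section AuxCover

variable {V : Type} [Fintype V] [DecidableEq V]

open scoped Classical in
/-- The vertices of `Xs` that are not isolated in `G`. -/
noncomputable def Xv (G : SimpleGraph V) (Xs : Finset V) : Finset V :=
  Xs.filter (fun a => ∃ b, G.Adj a b)

lemma mem_Xv {G : SimpleGraph V} {Xs : Finset V} {a : V} :
    a ∈ Xv G Xs ↔ a ∈ Xs ∧ ∃ b, G.Adj a b := by
  simp [Xv]

lemma exists_minimal_subcover (G : SimpleGraph V) (C : Finset V)
    (hC : IsVertexCover G C) : ∃ C' ⊆ C, IsMinimalVertexCover G C' := by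
  induction C using Finset.strongInductionOn with
  | _ C ih =>
    by_cases h : ∀ C'' ⊆ C, IsVertexCover G C'' → C'' = C
    · exact ⟨C, Finset.Subset.refl C, hC, h⟩
    · push_neg at h
      obtain ⟨C'', hsub, hcov, hne⟩ := h
      obtain ⟨C', h1, h2⟩ := ih C'' (Finset.ssubset_iff_subset_ne.mpr ⟨hsub, hne⟩) hcov
      exact ⟨C', h1.trans hsub, h2⟩

lemma bip_symm {G : SimpleGraph V} {Xs Ys : Finset V}
    (h : IsBipartition G Xs Ys) : IsBipartition G Ys Xs :=
  ⟨h.1.symm, fun v => (h.2.1 v).symm, fun u v huv => ((h.2.2 u v huv).symm)⟩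

variable {G : SimpleGraph V} {Xs Ys : Finset V}

lemma Xv_minimal (hbip : IsBipartition G Xs Ys) :
    IsMinimalVertexCover G (Xv G Xs) := by
  obtain ⟨hdisj, htot, hcross⟩ := hbip
  constructor
  · intro u v huv
    rcases hcross u v huv with ⟨h1, _⟩ | ⟨_, h2⟩
    · exact Or.inl (mem_Xv.mpr ⟨h1, v, huv⟩)
    · exact Or.inr (mem_Xv.mpr ⟨h2, u, huv.symm⟩)
  · intro C hsub hcov
    refine Finset.Subset.antisymm hsub (fun a ha => ?_)
    obtain ⟨haX, b, hab⟩ := mem_Xv.mp ha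
    rcases hcov a b hab with h | h
    · exact h
    · exfalso
      have hbX : b ∈ Xs := (mem_Xv.mp (hsub h)).1
      have hbY : b ∈ Ys := by
        rcases hcross a b hab with ⟨_, h2⟩ | ⟨h1, _⟩
        · exact h2
        · exact absurd haX (Finset.disjoint_right.mp hdisj h1)
      exact Finset.disjoint_left.mp hdisj hbX hbY

lemma cover_card_lb (hbip : IsBipartition G Xs Ys) (hunm : IsUnmixed G)
    (C : Finset V) (hC : IsVertexCover G C) : (Xv G Xs).card ≤ C.card := by
  obtain ⟨C', hsub, hmin⟩ := exists_minimal_subcover G C hC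
  calc (Xv G Xs).card = C'.card := hunm _ _ (Xv_minimal hbip) hmin
    _ ≤ C.card := Finset.card_le_card hsub

lemma exists_matching (hbip : IsBipartition G Xs Ys) (hunm : IsUnmixed G) :
    ∃ μ : V → V, (∀ a ∈ Xv G Xs, G.Adj a (μ a) ∧ μ a ∈ Xv G Ys) ∧
      Set.InjOn μ (Xv G Xs) ∧ (Xv G Ys : Finset V) ⊆ (Xv G Xs).image μ := by
  classical
  obtain ⟨hdisj, htot, hcross⟩ := id hbip
  have hcard : (Xv G Xs).card = (Xv G Ys).card :=
    hunm _ _ (Xv_minimal hbip) (Xv_minimal (bip_symm hbip))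
  set t : ↥(Xv G Xs) → Finset V :=
    fun a => (Xv G Ys).filter (fun b => G.Adj a b) with ht
  have hall : ∀ sf : Finset ↥(Xv G Xs), sf.card ≤ (sf.biUnion t).card := by
    intro sf
    have hSsub : sf.image Subtype.val ⊆ Xv G Xs := by
      intro x hx
      obtain ⟨a, _, rfl⟩ := Finset.mem_image.mp hx
      exact a.2
    have hBY : sf.biUnion t ⊆ Xv G Ys := by
      intro x hx
      obtain ⟨a, _, hxa⟩ := Finset.mem_biUnion.mp hx
      exact (Finset.mem_filter.mp hxa).1
    have hcov : IsVertexCover G ((Xv G Xs \ sf.image Subtype.val) ∪ sf.biUnion t) := by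
      intro u v huv
      rcases hcross u v huv with ⟨hu, hv⟩ | ⟨hu, hv⟩
      · have huX : u ∈ Xv G Xs := mem_Xv.mpr ⟨hu, v, huv⟩
        by_cases huS : u ∈ sf.image Subtype.val
        · obtain ⟨a, ha, rfl⟩ := Finset.mem_image.mp huS
          refine Or.inr (Finset.mem_union_right _ (Finset.mem_biUnion.mpr
            ⟨a, ha, Finset.mem_filter.mpr ⟨mem_Xv.mpr ⟨hv, _, huv.symm⟩, huv⟩⟩))
        · exact Or.inl (Finset.mem_union_left _ (Finset.mem_sdiff.mpr ⟨huX, huS⟩))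
      · have hvX : v ∈ Xv G Xs := mem_Xv.mpr ⟨hv, u, huv.symm⟩
        by_cases hvS : v ∈ sf.image Subtype.val
        · obtain ⟨a, ha, rfl⟩ := Finset.mem_image.mp hvS
          refine Or.inl (Finset.mem_union_right _ (Finset.mem_biUnion.mpr
            ⟨a, ha, Finset.mem_filter.mpr ⟨mem_Xv.mpr ⟨hu, _, huv⟩, huv.symm⟩⟩))
        · exact Or.inr (Finset.mem_union_left _ (Finset.mem_sdiff.mpr ⟨hvX, hvS⟩))
    have hlb := cover_card_lb hbip hunm _ hcov
    have h1 : ((Xv G Xs \ sf.image Subtype.val) ∪ sf.biUnion t).card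
        ≤ (Xv G Xs \ sf.image Subtype.val).card + (sf.biUnion t).card :=
      Finset.card_union_le _ _
    have h2 : (Xv G Xs \ sf.image Subtype.val).card
        = (Xv G Xs).card - (sf.image Subtype.val).card :=
      Finset.card_sdiff_of_subset hSsub
    have h3 : (sf.image Subtype.val).card ≤ (Xv G Xs).card := Finset.card_le_card hSsub
    have h4 : sf.card = (sf.image Subtype.val).card :=
      (Finset.card_image_of_injective sf Subtype.val_injective).symm
    omega
  obtain ⟨f, hinj, hf⟩ := (Finset.all_card_le_biUnion_card_iff_exists_injective t).mp hall
  set μ : V → V := fun a => if h : a ∈ Xv G Xs then f ⟨a, h⟩ else a with hμ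
  have hμ1 : ∀ a ∈ Xv G Xs, G.Adj a (μ a) ∧ μ a ∈ Xv G Ys := by
    intro a ha
    have := hf ⟨a, ha⟩
    rw [ht] at this
    have h2 := Finset.mem_filter.mp this
    constructor
    · show G.Adj a (if h : a ∈ Xv G Xs then f ⟨a, h⟩ else a)
      rw [dif_pos ha]; exact h2.2
    · show (if h : a ∈ Xv G Xs then f ⟨a, h⟩ else a) ∈ Xv G Ys
      rw [dif_pos ha]; exact h2.1
  have hμinj : Set.InjOn μ (Xv G Xs) := by
    intro a ha b hb hab
    rw [show μ a = f ⟨a, ha⟩ from dif_pos ha, show μ b = f ⟨b, hb⟩ from dif_pos hb] at hab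
    exact Subtype.ext_iff.mp (hinj hab)
  refine ⟨μ, hμ1, hμinj, ?_⟩
  have himg : (Xv G Xs).image μ ⊆ Xv G Ys := by
    intro x hx
    obtain ⟨a, ha, rfl⟩ := Finset.mem_image.mp hx
    exact (hμ1 a ha).2
  have hcard2 : ((Xv G Xs).image μ).card = (Xv G Ys).card := by
    rw [Finset.card_image_of_injOn hμinj, hcard]
  rw [Finset.eq_of_subset_of_card_le himg (le_of_eq hcard2.symm)]

end AuxCover

section AuxRel

variable {V : Type} [Fintype V] [DecidableEq V]
variable {G : SimpleGraph V} {Xs Ys : Finset V} {μ : V → V}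

lemma phi_injOn (hbip : IsBipartition G Xs Ys)
    (hμY : ∀ a ∈ Xv G Xs, μ a ∈ Xv G Ys)
    (hμinj : Set.InjOn μ (Xv G Xs)) (C : Finset V) [DecidablePred (· ∈ C)] :
    Set.InjOn (fun t => if t ∈ C then t else μ t) (Xv G Xs) := by
  intro a ha b hb hab
  simp only at hab
  by_cases h1 : a ∈ C <;> by_cases h2 : b ∈ C
  · rwa [if_pos h1, if_pos h2] at hab
  · rw [if_pos h1, if_neg h2] at hab
    exfalso
    have haX : a ∈ Xs := (mem_Xv.mp ha).1
    have haY : a ∈ Ys := by rw [hab]; exact (mem_Xv.mp (hμY b hb)).1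
    exact Finset.disjoint_left.mp hbip.1 haX haY
  · rw [if_neg h1, if_pos h2] at hab
    exfalso
    have hbX : b ∈ Xs := (mem_Xv.mp hb).1
    have hbY : b ∈ Ys := by rw [← hab]; exact (mem_Xv.mp (hμY a ha)).1
    exact Finset.disjoint_left.mp hbip.1 hbX hbY
  · rw [if_neg h1, if_neg h2] at hab
    exact hμinj ha hb hab

lemma pairs_card (hbip : IsBipartition G Xs Ys)
    (hμY : ∀ a ∈ Xv G Xs, μ a ∈ Xv G Ys)
    (hμinj : Set.InjOn μ (Xv G Xs))
    {C : Finset V}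
    (hsub : C ⊆ Xv G Xs ∪ Xv G Ys)
    (hYim : Xv G Ys ⊆ (Xv G Xs).image μ)
    (hhit : ∀ t ∈ Xv G Xs, t ∈ C ∨ μ t ∈ C)
    (hnotboth : ∀ t ∈ Xv G Xs, ¬(t ∈ C ∧ μ t ∈ C)) :
    C.card = (Xv G Xs).card := by
  classical
  have himg : (Xv G Xs).image (fun t => if t ∈ C then t else μ t) = C := by
    apply Finset.Subset.antisymm
    · intro x hx
      obtain ⟨a, ha, rfl⟩ := Finset.mem_image.mp hx
      by_cases h : a ∈ C
      · rwa [if_pos h]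
      · rw [if_neg h]; exact (hhit a ha).resolve_left h
    · intro w hw
      rcases Finset.mem_union.mp (hsub hw) with h | h
      · exact Finset.mem_image.mpr ⟨w, h, by rw [if_pos hw]⟩
      · obtain ⟨a, ha, rfl⟩ := Finset.mem_image.mp (hYim h)
        have hanC : a ∉ C := fun hac => hnotboth a ha ⟨hac, hw⟩
        exact Finset.mem_image.mpr ⟨a, ha, by rw [if_neg hanC]⟩
  rw [← himg, Finset.card_image_of_injOn (phi_injOn hbip hμY hμinj C)]

lemma not_both (hbip : IsBipartition G Xs Ys)
    (hμY : ∀ a ∈ Xv G Xs, μ a ∈ Xv G Ys)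
    (hμinj : Set.InjOn μ (Xv G Xs))
    {H : SimpleGraph V} {C : Finset V}
    (hcov : IsVertexCover H C)
    (hadjμ : ∀ a ∈ Xv G Xs, H.Adj a (μ a))
    (hsub : C ⊆ Xv G Xs ∪ Xv G Ys)
    (hcard : C.card = (Xv G Xs).card) :
    ∀ t ∈ Xv G Xs, ¬(t ∈ C ∧ μ t ∈ C) := by
  classical
  have hhit : ∀ a ∈ Xv G Xs, a ∈ C ∨ μ a ∈ C := fun a ha => hcov a (μ a) (hadjμ a ha)
  have himg : (Xv G Xs).image (fun t => if t ∈ C then t else μ t) ⊆ C := by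
    intro x hx
    obtain ⟨a, ha, rfl⟩ := Finset.mem_image.mp hx
    by_cases h : a ∈ C
    · rwa [if_pos h]
    · rw [if_neg h]; exact (hhit a ha).resolve_left h
  have hcard2 : ((Xv G Xs).image (fun t => if t ∈ C then t else μ t)).card = C.card := by
    rw [Finset.card_image_of_injOn (phi_injOn hbip hμY hμinj C), hcard]
  have heq : (Xv G Xs).image (fun t => if t ∈ C then t else μ t) = C :=
    Finset.eq_of_subset_of_card_le himg (le_of_eq hcard2.symm)
  rintro t ht ⟨h1, h2⟩
  have hmem : μ t ∈ (Xv G Xs).image (fun t => if t ∈ C then t else μ t) := by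
    rw [heq]; exact h2
  obtain ⟨a, ha, hat⟩ := Finset.mem_image.mp hmem
  by_cases h : a ∈ C
  · rw [if_pos h] at hat
    have haY : a ∈ Ys := by rw [hat]; exact (mem_Xv.mp (hμY t ht)).1
    exact Finset.disjoint_left.mp hbip.1 (mem_Xv.mp ha).1 haY
  · rw [if_neg h] at hat
    exact h ((hμinj ha ht hat) ▸ h1)

lemma rel_trans (hbip : IsBipartition G Xs Ys) (hunm : IsUnmixed G)
    (hμadj : ∀ a ∈ Xv G Xs, G.Adj a (μ a))
    (hμY : ∀ a ∈ Xv G Xs, μ a ∈ Xv G Ys)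
    (hμinj : Set.InjOn μ (Xv G Xs))
    {a b c : V} (ha : a ∈ Xv G Xs) (hb : b ∈ Xv G Xs) (hc : c ∈ Xv G Xs)
    (h1 : G.Adj a (μ b)) (h2 : G.Adj b (μ c)) : G.Adj a (μ c) := by
  classical
  by_cases hac : a = c
  · subst hac; exact hμadj a ha
  by_cases hab : a = b
  · subst hab; exact h2
  by_cases hbc : b = c
  · subst hbc; exact h1
  by_contra hn
  have haX : a ∈ Xs := (mem_Xv.mp ha).1
  have hcY : μ c ∈ Ys := (mem_Xv.mp (hμY c hc)).1
  have hC0 : IsVertexCover G (((Xv G Xs ∪ Xv G Ys).erase a).erase (μ c)) := by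
    intro u v huv
    rcases hbip.2.2 u v huv with ⟨hu, hv⟩ | ⟨hu, hv⟩
    · by_cases hua : u = a
      · subst hua
        have hvc : v ≠ μ c := fun h => hn (h ▸ huv)
        refine Or.inr (Finset.mem_erase.mpr ⟨hvc, Finset.mem_erase.mpr
          ⟨fun h => Finset.disjoint_left.mp hbip.1 haX (h ▸ hv), ?_⟩⟩)
        exact Finset.mem_union_right _ (mem_Xv.mpr ⟨hv, u, huv.symm⟩)
      · refine Or.inl (Finset.mem_erase.mpr
          ⟨fun h => Finset.disjoint_left.mp hbip.1 hu (h ▸ hcY), Finset.mem_erase.mpr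
          ⟨hua, Finset.mem_union_left _ (mem_Xv.mpr ⟨hu, v, huv⟩)⟩⟩)
    · by_cases hva : v = a
      · subst hva
        have huc : u ≠ μ c := fun h => hn (h ▸ huv.symm)
        refine Or.inl (Finset.mem_erase.mpr ⟨huc, Finset.mem_erase.mpr
          ⟨fun h => Finset.disjoint_left.mp hbip.1 haX (h ▸ hu), ?_⟩⟩)
        exact Finset.mem_union_right _ (mem_Xv.mpr ⟨hu, v, huv⟩)
      · refine Or.inr (Finset.mem_erase.mpr
          ⟨fun h => Finset.disjoint_left.mp hbip.1 hv (h ▸ hcY), Finset.mem_erase.mpr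
          ⟨hva, Finset.mem_union_left _ (mem_Xv.mpr ⟨hv, u, huv.symm⟩)⟩⟩)
  obtain ⟨C', hsub', hmin'⟩ := exists_minimal_subcover G _ hC0
  have hcard' : C'.card = (Xv G Xs).card := hunm _ _ hmin' (Xv_minimal hbip)
  have hCsub : C' ⊆ Xv G Xs ∪ Xv G Ys :=
    fun x hx => Finset.mem_of_mem_erase (Finset.mem_of_mem_erase (hsub' hx))
  have hnb := not_both hbip hμY hμinj hmin'.1 hμadj hCsub hcard'
  have haC : a ∉ C' := fun h =>
    (Finset.notMem_erase a _) (Finset.mem_of_mem_erase (hsub' h))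
  have hμcC : μ c ∉ C' := fun h => (Finset.notMem_erase _ _) (hsub' h)
  have hμbC : μ b ∈ C' := (hmin'.1 a (μ b) h1).resolve_left haC
  have hbC : b ∉ C' := fun hbC' => hnb b hb ⟨hbC', hμbC⟩
  rcases hmin'.1 b (μ c) h2 with h | h
  · exact hbC h
  · exact hμcC h

end AuxRel

section AuxCC

variable {V : Type} [Fintype V] [DecidableEq V]
variable {G : SimpleGraph V} {Xs Ys : Finset V} {μ : V → V}

/-- `U` is an up-closed set of non-isolated `Xs`-vertices for the relation
`p → q` iff `G.Adj p (μ q)`. -/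
def UpClosed (G : SimpleGraph V) (μ : V → V) (Xs : Finset V) (U : Finset V) : Prop :=
  U ⊆ Xv G Xs ∧ ∀ p ∈ U, ∀ q ∈ Xv G Xs, G.Adj p (μ q) → q ∈ U

lemma edge_normalize (hbip : IsBipartition G Xs Ys)
    (hYim : Xv G Ys ⊆ (Xv G Xs).image μ)
    {u v : V} (huv : G.Adj u v) :
    ∃ p ∈ Xv G Xs, ∃ q ∈ Xv G Xs, eF u v = eF p (μ q) ∧ G.Adj p (μ q) := by
  rcases hbip.2.2 u v huv with ⟨hu, hv⟩ | ⟨hu, hv⟩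
  · obtain ⟨q, hq, hqv⟩ := Finset.mem_image.mp (hYim (mem_Xv.mpr ⟨hv, u, huv.symm⟩))
    exact ⟨u, mem_Xv.mpr ⟨hu, v, huv⟩, q, hq, by rw [hqv], by rw [hqv]; exact huv⟩
  · obtain ⟨q, hq, hqv⟩ := Finset.mem_image.mp (hYim (mem_Xv.mpr ⟨hu, v, huv⟩))
    exact ⟨v, mem_Xv.mpr ⟨hv, u, huv.symm⟩, q, hq,
      by rw [hqv]; exact eF_comm u v, by rw [hqv]; exact huv.symm⟩

/-- Count of `μ`-images of `U` with multiplicity in `d`. -/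
def cntY (μ : V → V) (U : Finset V) (d : V →₀ ℕ) : ℕ := ∑ a ∈ U, d (μ a)

lemma cntY_add (U : Finset V) (d d' : V →₀ ℕ) :
    cntY μ U (d + d') = cntY μ U d + cntY μ U d' := by
  simp [cntY, Finset.sum_add_distrib]

lemma cntY_sum {ι : Type} (U : Finset V) (S : Finset ι) (g : ι → (V →₀ ℕ)) :
    cntY μ U (∑ i ∈ S, g i) = ∑ i ∈ S, cntY μ U (g i) := by
  simp only [cntY, Finsupp.finset_sum_apply]
  exact Finset.sum_comm

lemma cnt_eF_left (hbip : IsBipartition G Xs Ys)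
    (hμY : ∀ a ∈ Xv G Xs, μ a ∈ Xv G Ys)
    {U : Finset V} (hU : U ⊆ Xv G Xs) {p q : V} (hq : q ∈ Xv G Xs) :
    cnt U (eF p (μ q)) = (if p ∈ U then 1 else 0) := by
  rw [cnt_eF]
  have hnot : μ q ∉ U := fun h => Finset.disjoint_left.mp hbip.1
    (mem_Xv.mp (hU h)).1 (mem_Xv.mp (hμY q hq)).1
  rw [if_neg hnot, add_zero]

lemma cntY_eF (hbip : IsBipartition G Xs Ys)
    (hμY : ∀ a ∈ Xv G Xs, μ a ∈ Xv G Ys)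
    (hμinj : Set.InjOn μ (Xv G Xs))
    {U : Finset V} (hU : U ⊆ Xv G Xs) {p q : V} (hp : p ∈ Xs) (hq : q ∈ Xv G Xs) :
    cntY μ U (eF p (μ q)) = (if q ∈ U then 1 else 0) := by
  unfold cntY
  have hterm : ∀ a ∈ U, eF p (μ q) (μ a) = (if q = a then 1 else 0) := by
    intro a ha
    rw [eF_apply]
    have h1 : p ≠ μ a := fun h =>
      Finset.disjoint_left.mp hbip.1 hp (h ▸ (mem_Xv.mp (hμY a (hU ha))).1)
    rw [if_neg h1, zero_add]
    by_cases h : q = a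
    · subst h; rw [if_pos rfl, if_pos rfl]
    · rw [if_neg (fun h' => h (hμinj hq (hU ha) h')), if_neg h]
  rw [Finset.sum_congr rfl hterm, Finset.sum_ite_eq]

lemma dec_iff_cc (hbip : IsBipartition G Xs Ys) (hunm : IsUnmixed G)
    (hμadj : ∀ a ∈ Xv G Xs, G.Adj a (μ a))
    (hμY : ∀ a ∈ Xv G Xs, μ a ∈ Xv G Ys)
    (hμinj : Set.InjOn μ (Xv G Xs))
    (hYim : Xv G Ys ⊆ (Xv G Xs).image μ)
    {s : ℕ} {e : Fin s → V × V}
    (cE dE : Fin s → V)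
    (hcd : ∀ t, cE t ∈ Xv G Xs ∧ dE t ∈ Xv G Xs ∧
      eF (e t).1 (e t).2 = eF (cE t) (μ (dE t)) ∧ G.Adj (cE t) (μ (dE t)))
    {a c : V} (ha : a ∈ Xv G Xs) (hc : c ∈ Xv G Xs) :
    Dec G e a (μ c) ↔ ∀ U : Finset V, UpClosed G μ Xs U →
      ((if a ∈ U then 1 else 0) + ∑ t, (if cE t ∈ U then 1 else 0) : ℕ) ≤
      (if c ∈ U then 1 else 0) + ∑ t, (if dE t ∈ U then 1 else 0) := by
  classical
  constructor
  · rintro ⟨E, hE, heq⟩ U hU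
    have hnorm : ∀ r : Fin (s + 1), ∃ p ∈ Xv G Xs, ∃ q ∈ Xv G Xs,
        eF (E r).1 (E r).2 = eF p (μ q) ∧ G.Adj p (μ q) :=
      fun r => edge_normalize hbip hYim (hE r)
    choose α hα β hβ hEF hEadj using hnorm
    have heq2 : eF a (μ c) + FF e = ∑ r, eF (α r) (μ (β r)) := by
      rw [heq]; exact Finset.sum_congr rfl fun r _ => hEF r
    have hXeq := congrArg (cnt U) heq2
    rw [cnt_add, cnt_sum] at hXeq
    rw [cnt_eF_left hbip hμY hU.1 hc] at hXeq
    have hFFX : cnt U (FF e) = ∑ t, (if cE t ∈ U then 1 else 0) := by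
      rw [cnt_FF]
      refine Finset.sum_congr rfl fun t _ => ?_
      rw [(hcd t).2.2.1, cnt_eF_left hbip hμY hU.1 (hcd t).2.1]
    rw [hFFX] at hXeq
    rw [Finset.sum_congr rfl (fun r _ => cnt_eF_left hbip hμY hU.1 (hβ r))] at hXeq
    have hYeq := congrArg (cntY μ U) heq2
    rw [cntY_add, cntY_sum] at hYeq
    rw [cntY_eF hbip hμY hμinj hU.1 (mem_Xv.mp ha).1 hc] at hYeq
    have hFFY : cntY μ U (FF e) = ∑ t, (if dE t ∈ U then 1 else 0) := by
      rw [FF, cntY_sum]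
      refine Finset.sum_congr rfl fun t _ => ?_
      rw [(hcd t).2.2.1, cntY_eF hbip hμY hμinj hU.1 (mem_Xv.mp (hcd t).1).1 (hcd t).2.1]
    rw [hFFY] at hYeq
    rw [Finset.sum_congr rfl
      (fun r _ => cntY_eF hbip hμY hμinj hU.1 (mem_Xv.mp (hα r)).1 (hβ r))] at hYeq
    have hpt : ∀ r : Fin (s + 1),
        ((if α r ∈ U then 1 else 0) : ℕ) ≤ (if β r ∈ U then 1 else 0) := by
      intro r
      by_cases h : α r ∈ U
      · rw [if_pos h, if_pos (hU.2 (α r) h (β r) (hβ r) (hEadj r))]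
      · rw [if_neg h]; omega
    calc ((if a ∈ U then 1 else 0) + ∑ t, (if cE t ∈ U then 1 else 0) : ℕ)
        = ∑ r, (if α r ∈ U then 1 else 0) := hXeq
      _ ≤ ∑ r, (if β r ∈ U then 1 else 0) := Finset.sum_le_sum fun r _ => hpt r
      _ = (if c ∈ U then 1 else 0) + ∑ t, (if dE t ∈ U then 1 else 0) := hYeq.symm
  · intro hcc
    have hLmem : ∀ r : Fin (s + 1), Fin.cons (α := fun _ => V) a cE r ∈ Xv G Xs := by
      intro r
      refine Fin.cases ?_ ?_ r
      · simpa using ha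
      · intro t; simpa using (hcd t).1
    have hRmem : ∀ q : Fin (s + 1), Fin.cons (α := fun _ => V) c dE q ∈ Xv G Xs := by
      intro q
      refine Fin.cases ?_ ?_ q
      · simpa using hc
      · intro t; simpa using (hcd t).2.1
    have hall : ∀ sf : Finset (Fin (s + 1)),
        sf.card ≤ (sf.biUnion (fun r => Finset.univ.filter
          (fun q => G.Adj (Fin.cons (α := fun _ => V) a cE r) (μ (Fin.cons (α := fun _ => V) c dE q))))).card := by
      intro sf
      set U : Finset V := (Xv G Xs).filter
        (fun q => ∃ r ∈ sf, G.Adj (Fin.cons (α := fun _ => V) a cE r) (μ q)) with hUdef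
      have hUup : UpClosed G μ Xs U := by
        constructor
        · exact Finset.filter_subset _ _
        · intro p hp q hq hpq
          obtain ⟨hpX, r, hr, hadj⟩ := Finset.mem_filter.mp hp
          exact Finset.mem_filter.mpr
            ⟨hq, r, hr, rel_trans hbip hunm hμadj hμY hμinj (hLmem r) hpX hq hadj hpq⟩
      have hkey := hcc U hUup
      have h1 : sf.card ≤ ∑ r : Fin (s + 1),
          ((if Fin.cons (α := fun _ => V) a cE r ∈ U then 1 else 0) : ℕ) := by
        have hsub : sf ⊆ Finset.univ.filter (fun r => Fin.cons (α := fun _ => V) a cE r ∈ U) := by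
          intro r hr
          refine Finset.mem_filter.mpr ⟨Finset.mem_univ r, ?_⟩
          exact Finset.mem_filter.mpr ⟨hLmem r, r, hr, hμadj _ (hLmem r)⟩
        calc sf.card ≤ (Finset.univ.filter (fun r => Fin.cons (α := fun _ => V) a cE r ∈ U)).card :=
              Finset.card_le_card hsub
          _ = _ := Finset.card_filter _ _
      have hsumL : (∑ r : Fin (s + 1), ((if Fin.cons (α := fun _ => V) a cE r ∈ U then 1 else 0) : ℕ))
          = (if a ∈ U then 1 else 0) + ∑ t, (if cE t ∈ U then 1 else 0) := by
        rw [Fin.sum_univ_succ]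
        simp
      have h2 : (sf.biUnion (fun r => Finset.univ.filter
          (fun q => G.Adj (Fin.cons (α := fun _ => V) a cE r) (μ (Fin.cons (α := fun _ => V) c dE q))))).card
          = ∑ q : Fin (s + 1), ((if Fin.cons (α := fun _ => V) c dE q ∈ U then 1 else 0) : ℕ) := by
        have hBeq : sf.biUnion (fun r => Finset.univ.filter
            (fun q => G.Adj (Fin.cons (α := fun _ => V) a cE r) (μ (Fin.cons (α := fun _ => V) c dE q))))
            = Finset.univ.filter (fun q => Fin.cons (α := fun _ => V) c dE q ∈ U) := by
          ext q
          simp only [Finset.mem_biUnion, Finset.mem_filter, Finset.mem_univ, true_and]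
          constructor
          · rintro ⟨r, hr, hadj⟩
            exact Finset.mem_filter.mpr ⟨hRmem q, r, hr, hadj⟩
          · intro hq
            obtain ⟨-, r, hr, hadj⟩ := Finset.mem_filter.mp hq
            exact ⟨r, hr, hadj⟩
        rw [hBeq]
        exact Finset.card_filter _ _
      have hsumR : (∑ q : Fin (s + 1), ((if Fin.cons (α := fun _ => V) c dE q ∈ U then 1 else 0) : ℕ))
          = (if c ∈ U then 1 else 0) + ∑ t, (if dE t ∈ U then 1 else 0) := by
        rw [Fin.sum_univ_succ]
        simp
      rw [h2, hsumR]
      rw [hsumL] at h1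
      omega
    obtain ⟨σ, hσinj, hσmem⟩ :=
      (Finset.all_card_le_biUnion_card_iff_exists_injective _).mp hall
    have hσadj : ∀ r, G.Adj (Fin.cons (α := fun _ => V) a cE r) (μ (Fin.cons (α := fun _ => V) c dE (σ r))) :=
      fun r => (Finset.mem_filter.mp (hσmem r)).2
    have hσbij : Function.Bijective σ := Finite.injective_iff_bijective.mp hσinj
    have hre : (∑ r : Fin (s + 1), Finsupp.single (μ (Fin.cons (α := fun _ => V) c dE (σ r))) (1 : ℕ))
        = ∑ q : Fin (s + 1), Finsupp.single (μ (Fin.cons (α := fun _ => V) c dE q)) 1 :=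
      Fintype.sum_bijective σ hσbij _ _ (fun r => rfl)
    have hgoal : eF a (μ c) + FF e
        = ∑ r : Fin (s + 1), eF (Fin.cons (α := fun _ => V) a cE r) (μ (Fin.cons (α := fun _ => V) c dE (σ r))) := by
      have hFF2 : FF e = (∑ t, Finsupp.single (cE t) (1 : ℕ))
          + ∑ t, Finsupp.single (μ (dE t)) 1 := by
        rw [FF, ← Finset.sum_add_distrib]
        exact Finset.sum_congr rfl fun t _ => (hcd t).2.2.1
      have hR : (∑ r : Fin (s + 1), eF (Fin.cons (α := fun _ => V) a cE r) (μ (Fin.cons (α := fun _ => V) c dE (σ r))))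
          = (∑ r : Fin (s + 1), Finsupp.single (Fin.cons (α := fun _ => V) a cE r) (1 : ℕ))
            + ∑ r : Fin (s + 1), Finsupp.single (μ (Fin.cons (α := fun _ => V) c dE (σ r))) 1 := by
        rw [← Finset.sum_add_distrib]
        exact Finset.sum_congr rfl fun r _ => rfl
      rw [hFF2, hR, hre,
        Fin.sum_univ_succ (f := fun r => Finsupp.single (Fin.cons (α := fun _ => V) a cE r) (1 : ℕ)),
        Fin.sum_univ_succ (f := fun q => Finsupp.single (μ (Fin.cons (α := fun _ => V) c dE q)) (1 : ℕ))]
      simp only [Fin.cons_zero, Fin.cons_succ]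
      rw [eF]
      abel
    exact ⟨fun r => (Fin.cons (α := fun _ => V) a cE r, μ (Fin.cons (α := fun _ => V) c dE (σ r))), hσadj, hgoal⟩

end AuxCC

/-- If `G` is an unmixed bipartite graph, then for every `s ≥ 1`
and every `s`-fold product `e 0 ⋯ e (s-1)` of edges of `G` (not necessarily
distinct), the graph `G'` associated to the colon ideal
`(I(G)^(s+1) : e 0 ⋯ e (s-1))` (the simple graph, on the same vertex set, whose
edge ideal is this colon ideal) is also an unmixed bipartite graph. -/
theorem isUnmixed_colon (k : Type) [Field k] {V : Type} [Fintype V] [DecidableEq V]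
    (G G' : SimpleGraph V) (hbip : IsBipartite G) (hunm : IsUnmixed G)
    (s : ℕ) (hs : 1 ≤ s) (e : Fin s → V × V) (he : ∀ i, G.Adj (e i).1 (e i).2)
    (hG' : edgeIdeal k G' =
      Submodule.colon ((edgeIdeal k G) ^ (s + 1))
        (Ideal.span {∏ i, (X (e i).1 * X (e i).2 : MvPolynomial V k)})) :
    IsUnmixed G' ∧ IsBipartite G' := by
  classical
  obtain ⟨Xs, Ys, hbip⟩ := hbip
  obtain ⟨μ, hμ1, hμinj, hYim⟩ := exists_matching hbip hunm
  have hμadj : ∀ a ∈ Xv G Xs, G.Adj a (μ a) := fun a ha => (hμ1 a ha).1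
  have hμY : ∀ a ∈ Xv G Xs, μ a ∈ Xv G Ys := fun a ha => (hμ1 a ha).2
  have hchar : ∀ u v : V, u ≠ v → (G'.Adj u v ↔ Dec G e u v) :=
    fun u v h => adj_iff_dec k hG' h
  have hle : ∀ {u v : V}, G.Adj u v → G'.Adj u v := fun {u v} h => G_le_G' k hG' he h
  have hedge1 : ∀ u v : V, G.Adj u v → cnt Xs (eF u v) = 1 := by
    intro u v huv
    rw [cnt_eF]
    rcases hbip.2.2 u v huv with ⟨h1, h2⟩ | ⟨h1, h2⟩
    · rw [if_pos h1, if_neg (fun h => Finset.disjoint_left.mp hbip.1 h h2)]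
    · rw [if_neg (fun h => Finset.disjoint_left.mp hbip.1 h h1), if_pos h2]
  have hG'cross : ∀ u v : V, G'.Adj u v → cnt Xs (eF u v) = 1 := by
    intro u v huv
    obtain ⟨E, hE, heq⟩ := (hchar u v huv.ne).mp huv
    have h1 := congrArg (cnt Xs) heq
    rw [cnt_add, cnt_sum] at h1
    rw [Finset.sum_congr rfl (fun r _ => hedge1 _ _ (hE r))] at h1
    have h2 : cnt Xs (FF e) = s := by
      rw [cnt_FF, Finset.sum_congr rfl (fun t _ => hedge1 _ _ (he t))]
      simp
    rw [h2] at h1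
    simp at h1
    omega
  have hbip' : IsBipartition G' Xs Ys := by
    refine ⟨hbip.1, hbip.2.1, ?_⟩
    intro u v huv
    have h1 := hG'cross u v huv
    rw [cnt_eF] at h1
    by_cases hu : u ∈ Xs
    · left
      refine ⟨hu, ?_⟩
      rcases hbip.2.1 v with hv | hv
      · exfalso; rw [if_pos hu, if_pos hv] at h1; omega
      · exact hv
    · right
      rcases hbip.2.1 u with h | h
      · exact absurd h hu
      refine ⟨h, ?_⟩
      rw [if_neg hu] at h1
      by_cases hv : v ∈ Xs
      · exact hv
      · rw [if_neg hv] at h1; omega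
  choose cE hcd1 dE hcd2 hcd3 hcd4 using fun t => edge_normalize hbip hYim (he t)
  have hcd : ∀ t, cE t ∈ Xv G Xs ∧ dE t ∈ Xv G Xs ∧
      eF (e t).1 (e t).2 = eF (cE t) (μ (dE t)) ∧ G.Adj (cE t) (μ (dE t)) :=
    fun t => ⟨hcd1 t, hcd2 t, hcd3 t, hcd4 t⟩
  have hane : ∀ {a q : V}, a ∈ Xs → q ∈ Xv G Xs → a ≠ μ q := by
    intro a q ha hq h
    exact Finset.disjoint_left.mp hbip.1 ha (h ▸ (mem_Xv.mp (hμY q hq)).1)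
  have hR : ∀ a ∈ Xv G Xs, ∀ c ∈ Xv G Xs, (G'.Adj a (μ c) ↔
      ∀ U : Finset V, UpClosed G μ Xs U →
      ((if a ∈ U then 1 else 0) + ∑ t, (if cE t ∈ U then 1 else 0) : ℕ) ≤
      (if c ∈ U then 1 else 0) + ∑ t, (if dE t ∈ U then 1 else 0)) := by
    intro a ha c hc
    rw [hchar a (μ c) (hane (mem_Xv.mp ha).1 hc)]
    exact dec_iff_cc hbip hunm hμadj hμY hμinj hYim cE dE hcd ha hc
  have hRtrans : ∀ a ∈ Xv G Xs, ∀ b ∈ Xv G Xs, ∀ c ∈ Xv G Xs,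
      G'.Adj a (μ b) → G'.Adj b (μ c) → G'.Adj a (μ c) := by
    intro a ha b hb c hc h1 h2
    rw [hR a ha c hc]
    intro U hU
    have e1 := (hR a ha b hb).mp h1 U hU
    have e2 := (hR b hb c hc).mp h2 U hU
    by_cases hbU : b ∈ U
    · rw [if_pos hbU] at e2
      have hA : (if a ∈ U then 1 else 0 : ℕ) ≤ 1 := by split_ifs <;> omega
      omega
    · rw [if_neg hbU] at e1
      omega
  have hRrefl : ∀ a ∈ Xv G Xs, G'.Adj a (μ a) := fun a ha => hle (hμadj a ha)
  have hnonisoG' : ∀ u v : V, G'.Adj u v → u ∈ Xv G Xs ∪ Xv G Ys := by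
    intro u v huv
    have hni : ∃ w, G.Adj u w := dec_noniso ((hchar u v huv.ne).mp huv)
    rcases hbip.2.1 u with h | h
    · exact Finset.mem_union_left _ (mem_Xv.mpr ⟨h, hni⟩)
    · exact Finset.mem_union_right _ (mem_Xv.mpr ⟨h, hni⟩)
  have hshape : ∀ u v : V, G'.Adj u v → u ∈ Xs → ∃ q ∈ Xv G Xs, v = μ q := by
    intro u v huv hu
    have hvY : v ∈ Ys := by
      rcases hbip'.2.2 u v huv with ⟨_, h⟩ | ⟨h, _⟩
      · exact h
      · exact absurd hu (Finset.disjoint_right.mp hbip.1 h)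
    have hvni : ∃ w, G.Adj v w := dec_noniso ((hchar v u (huv.symm.ne)).mp huv.symm)
    obtain ⟨q, hq, hqv⟩ := Finset.mem_image.mp (hYim (mem_Xv.mpr ⟨hvY, hvni⟩))
    exact ⟨q, hq, hqv.symm⟩
  constructor
  · intro C C' hC hC'
    suffices h : ∀ D, IsMinimalVertexCover G' D → D.card = (Xv G Xs).card by
      rw [h C hC, h C' hC']
    intro D hD
    have hDsub : D ⊆ Xv G Xs ∪ Xv G Ys := by
      intro w hw
      by_contra hwn
      have hiso : ∀ z, ¬ G'.Adj w z := fun z hz => hwn (hnonisoG' w z hz)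
      have hcov2 : IsVertexCover G' (D.erase w) := by
        intro u v huv
        rcases hD.1 u v huv with h | h
        · exact Or.inl (Finset.mem_erase.mpr ⟨fun hh => hiso v (hh ▸ huv), h⟩)
        · exact Or.inr (Finset.mem_erase.mpr ⟨fun hh => hiso u (hh ▸ huv.symm), h⟩)
      have heq := hD.2 _ (Finset.erase_subset w D) hcov2
      exact (Finset.notMem_erase w D) (by rw [heq]; exact hw)
    have hhit : ∀ t ∈ Xv G Xs, t ∈ D ∨ μ t ∈ D := fun t ht => hD.1 t (μ t) (hRrefl t ht)
    have hnb : ∀ t ∈ Xv G Xs, ¬(t ∈ D ∧ μ t ∈ D) := by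
      rintro t ht ⟨h1, h2⟩
      have htX : t ∈ Xs := (mem_Xv.mp ht).1
      have hμtY : μ t ∈ Ys := (mem_Xv.mp (hμY t ht)).1
      have hexgen : ∀ w ∈ D, ∃ u v, G'.Adj u v ∧ u ∉ D.erase w ∧ v ∉ D.erase w := by
        intro w hw
        by_contra hno
        push_neg at hno
        have hcv : IsVertexCover G' (D.erase w) := by
          intro u v huv
          by_cases hu : u ∈ D.erase w
          · exact Or.inl hu
          · exact Or.inr (hno u v huv hu)
        have heq := hD.2 _ (Finset.erase_subset w D) hcv
        exact (Finset.notMem_erase w D) (by rw [heq]; exact hw)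
      have hstep1 : ∃ j ∈ Xv G Xs, G'.Adj t (μ j) ∧ μ j ∉ D := by
        obtain ⟨u, v, huv, hu, hv⟩ := hexgen t h1
        rcases hD.1 u v huv with h | h
        · have hut : u = t := by
            by_contra hne; exact hu (Finset.mem_erase.mpr ⟨hne, h⟩)
          rw [hut] at huv
          have hvD : v ∉ D := fun hvD =>
            hv (Finset.mem_erase.mpr ⟨fun hh => huv.ne hh.symm, hvD⟩)
          obtain ⟨j, hj, hvj⟩ := hshape t v huv htX
          exact ⟨j, hj, hvj ▸ huv, hvj ▸ hvD⟩
        · have hvt : v = t := by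
            by_contra hne; exact hv (Finset.mem_erase.mpr ⟨hne, h⟩)
          rw [hvt] at huv
          have huD : u ∉ D := fun huD =>
            hu (Finset.mem_erase.mpr ⟨fun hh => huv.ne hh, huD⟩)
          obtain ⟨j, hj, huj⟩ := hshape t u huv.symm htX
          exact ⟨j, hj, huj ▸ huv.symm, huj ▸ huD⟩
      have hstep2 : ∃ l ∈ Xv G Xs, G'.Adj l (μ t) ∧ l ∉ D := by
        obtain ⟨u, v, huv, hu, hv⟩ := hexgen (μ t) h2
        rcases hD.1 u v huv with h | h
        · have hut : u = μ t := by
            by_contra hne; exact hu (Finset.mem_erase.mpr ⟨hne, h⟩)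
          rw [hut] at huv
          have hvD : v ∉ D := fun hvD =>
            hv (Finset.mem_erase.mpr ⟨fun hh => huv.ne hh.symm, hvD⟩)
          have hvX : v ∈ Xs := by
            rcases hbip'.2.2 (μ t) v huv with ⟨hX, _⟩ | ⟨_, hX⟩
            · exact absurd hμtY (Finset.disjoint_left.mp hbip.1 hX)
            · exact hX
          have hvXv : v ∈ Xv G Xs := by
            rcases Finset.mem_union.mp (hnonisoG' v (μ t) huv.symm) with hh | hh
            · exact hh
            · exact absurd hvX (Finset.disjoint_right.mp hbip.1 (mem_Xv.mp hh).1)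
          exact ⟨v, hvXv, huv.symm, hvD⟩
        · have hvt : v = μ t := by
            by_contra hne; exact hv (Finset.mem_erase.mpr ⟨hne, h⟩)
          rw [hvt] at huv
          have huD : u ∉ D := fun huD =>
            hu (Finset.mem_erase.mpr ⟨fun hh => huv.ne hh, huD⟩)
          have huX : u ∈ Xs := by
            rcases hbip'.2.2 u (μ t) huv with ⟨hX, _⟩ | ⟨_, hX⟩
            · exact hX
            · exact absurd hX (Finset.disjoint_right.mp hbip.1 hμtY)
          have huXv : u ∈ Xv G Xs := by
            rcases Finset.mem_union.mp (hnonisoG' u (μ t) huv) with hh | hh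
            · exact hh
            · exact absurd huX (Finset.disjoint_right.mp hbip.1 (mem_Xv.mp hh).1)
          exact ⟨u, huXv, huv, huD⟩
      obtain ⟨j, hj, hadj1, hj2⟩ := hstep1
      obtain ⟨l, hl, hadj2, hl2⟩ := hstep2
      have htrans := hRtrans l hl t ht j hj hadj2 hadj1
      rcases hD.1 l (μ j) htrans with h | h
      · exact hl2 h
      · exact hj2 h
    exact pairs_card hbip hμY hμinj hDsub hYim hhit hnb
  · exact ⟨Xs, Ys, hbip'⟩


end RegPowers
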